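/- Let (p_n)_{n≥1} be a sequence of distinct real numbers with no finite accumulation point, let (r_n)_{n≥1} be positive integers, and let a_{n,k} ∈ ℂ for 1 ≤ k ≤ r_n. Assume that for every ε > 0 the double series Σ_{n=1}^∞ Σ_{k=1}^{r_n} |a_{n,k}|·ε^{−k} converges, and set P(s) = Σ_{n=1}^∞ Σ_{k=1}^{r_n} a_{n,k}·(s−ip_n)^{−k} and f(t) = Σ_{n=1}^∞ e^{i p_n t} Σ_{k=1}^{r_n} a_{n,k}·t^{k−1}/(k−1)!. Then for every s ∈ ℂ with Re(s) > 0 the function t ↦ e^{−st} f(t) is Lebesgue integrable on (0,∞) and ∫_0^∞ e^{−st} f(t) dt = P(s), and for every s with Re(s) < 0 the function t ↦ e^{−st} f(t) is Lebesgue integrable on (−∞,0) and −∫_{−∞}^0 e^{−st} f(t) dt = P(s). -/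

import Mathlib

open MeasureTheory Filter Set
open scoped ENNReal NNReal

namespace St6

lemma tendsto_pow_mul_exp {σ : ℝ} (hσ : 0 < σ) (k : ℕ) :
    Tendsto (fun x : ℝ => x ^ k * Real.exp (-σ * x)) atTop (nhds 0) := by
  have h1 : Tendsto (fun x : ℝ => σ * x) atTop atTop :=
    Tendsto.const_mul_atTop hσ tendsto_id
  have h2 := (Real.tendsto_pow_mul_exp_neg_atTop_nhds_zero k).comp h1
  have h3 := h2.const_mul ((σ ^ k)⁻¹)
  rw [mul_zero] at h3
  refine h3.congr fun x => ?_
  simp only [Function.comp_def]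
  rw [mul_pow]
  field_simp [Real.exp_ne_zero]

lemma intOn_real {σ : ℝ} (hσ : 0 < σ) (m : ℕ) :
    IntegrableOn (fun t : ℝ => Real.exp (-σ * t) * t ^ m) (Ioi 0) := by
  have h := integrableOn_rpow_mul_exp_neg_mul_rpow (s := (m : ℝ)) (p := 1) (b := σ)
    (by exact lt_of_lt_of_le (by norm_num) (Nat.cast_nonneg m)) zero_lt_one hσ
  refine h.congr_fun (fun x hx => ?_) measurableSet_Ioi
  beta_reduce
  rw [Real.rpow_one, Real.rpow_natCast, mul_comm]

lemma intOnC {w : ℂ} (hw : 0 < w.re) (m : ℕ) :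
    IntegrableOn (fun t : ℝ => Complex.exp (-w * t) * (t:ℂ) ^ m) (Ioi 0) := by
  refine Integrable.mono' (intOn_real hw m) ?_ ?_
  · apply Continuous.aestronglyMeasurable
    exact (Complex.continuous_exp.comp (continuous_const.mul Complex.continuous_ofReal)).mul
      (Complex.continuous_ofReal.pow m)
  · filter_upwards [ae_restrict_mem measurableSet_Ioi] with t ht
    rw [norm_mul, Complex.norm_exp, norm_pow,
      Complex.norm_real, Real.norm_eq_abs, abs_of_pos (by exact ht)]
    have : (-w * (t:ℂ)).re = -w.re * t := by simp
    rw [this]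

lemma tendstoF {w : ℂ} (hw : 0 < w.re) (k : ℕ) :
    Tendsto (fun x : ℝ => -(Complex.exp (-w * x) * (x:ℂ) ^ k / w)) atTop (nhds 0) := by
  rw [tendsto_zero_iff_norm_tendsto_zero]
  have hb := (tendsto_pow_mul_exp hw k).div_const ‖w‖
  rw [zero_div] at hb
  apply Tendsto.congr' _ hb
  filter_upwards [eventually_ge_atTop (0:ℝ)] with x hx
  rw [norm_neg, norm_div, norm_mul, Complex.norm_exp, norm_pow, Complex.norm_real,
    Real.norm_eq_abs, abs_of_nonneg hx]
  have : (-w * (x:ℂ)).re = -w.re * x := by simp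
  rw [this, mul_comm]

lemma integralC {w : ℂ} (hw : 0 < w.re) (m : ℕ) :
    ∫ t in Ioi (0:ℝ), Complex.exp (-w * t) * (t:ℂ) ^ m
      = (Nat.factorial m : ℂ) / w ^ (m + 1) := by
  have hw0 : w ≠ 0 := fun h => by simp [h] at hw
  induction m with
  | zero =>
      have hderiv : ∀ x ∈ Ici (0:ℝ),
          HasDerivAt (fun x : ℝ => -(Complex.exp (-w * x) * (x:ℂ) ^ 0 / w))
            (Complex.exp (-w * x) * (x:ℂ) ^ 0) x := by
        intro x _
        have h1 : HasDerivAt (fun z : ℂ => -(Complex.exp (-w * z) * z ^ 0 / w))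
            (Complex.exp (-w * (x:ℂ)) * (x:ℂ) ^ 0) (x:ℂ) := by
          simp only [pow_zero, mul_one]
          have h2 : HasDerivAt (fun z : ℂ => -w * z) (-w) (x:ℂ) := by
            simpa using (hasDerivAt_id (x:ℂ)).const_mul (-w)
          have h3 := ((h2.cexp).div_const w).neg
          refine h3.congr_deriv ?_
          rw [mul_neg, neg_div, neg_neg, mul_div_cancel_right₀ _ hw0]
        exact h1.comp_ofReal
      have := integral_Ioi_of_hasDerivAt_of_tendsto' hderiv
        (intOnC hw 0) (tendstoF hw 0)
      rw [this]
      simp [hw0]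
  | succ m ih =>
      have hderiv : ∀ x ∈ Ici (0:ℝ),
          HasDerivAt (fun x : ℝ => -(Complex.exp (-w * x) * (x:ℂ) ^ (m+1) / w))
            (Complex.exp (-w * x) * (x:ℂ) ^ (m+1)
              - ((m:ℂ)+1)/w * (Complex.exp (-w * x) * (x:ℂ) ^ m)) x := by
        intro x _
        have h2 : HasDerivAt (fun z : ℂ => -w * z) (-w) (x:ℂ) := by
          simpa using (hasDerivAt_id (x:ℂ)).const_mul (-w)
        have h3 := (((h2.cexp).mul (hasDerivAt_pow (m+1) (x:ℂ))).div_const w).neg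
        have h4 : -((Complex.exp (-w * (x:ℂ)) * -w * (x:ℂ) ^ (m + 1)
              + Complex.exp (-w * (x:ℂ)) * ((((m+1 : ℕ)) : ℂ) * (x:ℂ) ^ (m + 1 - 1))) / w)
            = Complex.exp (-w * (x:ℂ)) * (x:ℂ) ^ (m+1)
              - ((m:ℂ)+1)/w * (Complex.exp (-w * (x:ℂ)) * (x:ℂ) ^ m) := by
          push_cast [Nat.add_sub_cancel]
          field_simp
          ring
        rw [h4] at h3
        exact h3.comp_ofReal
      have hint : IntegrableOn (fun x : ℝ => Complex.exp (-w * x) * (x:ℂ) ^ (m+1)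
          - ((m:ℂ)+1)/w * (Complex.exp (-w * x) * (x:ℂ) ^ m)) (Ioi 0) :=
        (intOnC hw (m+1)).sub ((intOnC hw m).const_mul _)
      have heq := integral_Ioi_of_hasDerivAt_of_tendsto' hderiv hint (tendstoF hw (m+1))
      rw [integral_sub (intOnC hw (m+1)) ((intOnC hw m).const_mul _),
        integral_const_mul, ih] at heq
      have h0 : -(Complex.exp (-w * (0:ℝ)) * ((0:ℝ):ℂ) ^ (m+1) / w) = 0 := by
        simp
      rw [h0, zero_sub, neg_zero, sub_eq_zero] at heq
      rw [heq, Nat.factorial_succ]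
      push_cast
      rw [div_mul_div_comm, pow_succ]
      ring

lemma integralR {σ : ℝ} (hσ : 0 < σ) (m : ℕ) :
    ∫ t in Ioi (0:ℝ), Real.exp (-σ * t) * t ^ m
      = (Nat.factorial m : ℝ) / σ ^ (m + 1) := by
  have h := integralC (w := (σ:ℂ)) (by simpa using hσ) m
  have h2 : (∫ t in Ioi (0:ℝ), ((Real.exp (-σ * t) * t ^ m : ℝ) : ℂ))
      = ((∫ t in Ioi (0:ℝ), Real.exp (-σ * t) * t ^ m : ℝ) : ℂ) := integral_ofReal
  rw [show (fun t : ℝ => ((Real.exp (-σ * t) * t ^ m : ℝ) : ℂ))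
      = fun t : ℝ => Complex.exp (-(σ:ℂ) * t) * (t:ℂ) ^ m by
    funext t; push_cast [Complex.ofReal_exp]; ring_nf] at h2
  rw [h] at h2
  rw [← Complex.ofReal_inj, ← h2]
  push_cast
  ring


lemma core (r : ℕ → ℕ) (w : ℕ → ℂ) (σ : ℝ) (hσ : 0 < σ) (hw : ∀ n, (w n).re = σ)
    (d : ℕ → ℕ → ℂ)
    (hsum : Summable (fun n : ℕ => ∑ k ∈ Finset.Icc 1 (r n),
      ‖d n k‖ * σ ^ (-(k:ℤ)))) :
    IntegrableOn (fun t : ℝ => ∑' n : ℕ, Complex.exp (-(w n) * t) *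
        ∑ k ∈ Finset.Icc 1 (r n), d n k * (t:ℂ) ^ (k-1) / (Nat.factorial (k-1))) (Ioi 0) ∧
    (∫ t in Ioi (0:ℝ), ∑' n : ℕ, Complex.exp (-(w n) * t) *
        ∑ k ∈ Finset.Icc 1 (r n), d n k * (t:ℂ) ^ (k-1) / (Nat.factorial (k-1)))
      = ∑' n : ℕ, ∑ k ∈ Finset.Icc 1 (r n), d n k * (w n) ^ (-(k:ℤ)) := by
  set μ := volume.restrict (Ioi (0:ℝ)) with hμ
  set F : ℕ → ℝ → ℂ := fun n t => Complex.exp (-(w n) * t) *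
    ∑ k ∈ Finset.Icc 1 (r n), d n k * (t:ℂ) ^ (k-1) / (Nat.factorial (k-1)) with hFdef
  have hwpos : ∀ n, 0 < (w n).re := fun n => (hw n) ▸ hσ
  have hw0 : ∀ n, w n ≠ 0 := fun n h => by
    have := hwpos n; rw [h] at this; simp at this
  have hFd : ∀ n, F n = fun t : ℝ => ∑ k ∈ Finset.Icc 1 (r n),
      (d n k / (Nat.factorial (k-1) : ℂ)) * (Complex.exp (-(w n) * t) * (t:ℂ) ^ (k-1)) := by
    intro n
    funext t
    rw [hFdef]
    simp only [Finset.mul_sum]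
    exact Finset.sum_congr rfl fun k _ => by ring
  have hcont : ∀ n, Continuous (F n) := by
    intro n
    exact (Complex.continuous_exp.comp (continuous_const.mul Complex.continuous_ofReal)).mul
      (continuous_finset_sum _ fun k _ =>
        (continuous_const.mul (Complex.continuous_ofReal.pow _)).div_const _)
  have hFint : ∀ n, IntegrableOn (F n) (Ioi 0) := by
    intro n
    rw [hFd n]
    exact integrable_finset_sum _ fun k _ => ((intOnC (hwpos n) (k-1)).const_mul _)
  have hFval : ∀ n, (∫ t in Ioi (0:ℝ), F n t)
      = ∑ k ∈ Finset.Icc 1 (r n), d n k * (w n) ^ (-(k:ℤ)) := by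
    intro n
    rw [hFd n, integral_finset_sum _ fun k _ => ((intOnC (hwpos n) (k-1)).const_mul _)]
    refine Finset.sum_congr rfl fun k hk => ?_
    have hk1 : 1 ≤ k := (Finset.mem_Icc.mp hk).1
    rw [integral_const_mul, integralC (hwpos n) (k-1)]
    have hks : k - 1 + 1 = k := by omega
    have hfac : ((Nat.factorial (k-1) : ℂ)) ≠ 0 :=
      Nat.cast_ne_zero.mpr (Nat.factorial_ne_zero _)
    rw [hks, zpow_neg, zpow_natCast]
    field_simp
  -- bound on norm integrals
  set B : ℕ → ℝ := fun n => ∑ k ∈ Finset.Icc 1 (r n),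
    ‖d n k‖ * σ ^ (-(k:ℤ)) with hBdef
  have hGint : ∀ n, IntegrableOn (fun t : ℝ => ∑ k ∈ Finset.Icc 1 (r n),
      (‖d n k‖ / (Nat.factorial (k-1) : ℝ)) *
        (Real.exp (-σ * t) * t ^ (k-1))) (Ioi 0) :=
    fun n => integrable_finset_sum _ fun k _ => ((intOn_real hσ (k-1)).const_mul _)
  have hGval : ∀ n, (∫ t in Ioi (0:ℝ), ∑ k ∈ Finset.Icc 1 (r n),
      (‖d n k‖ / (Nat.factorial (k-1) : ℝ)) *
        (Real.exp (-σ * t) * t ^ (k-1))) = B n := by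
    intro n
    rw [integral_finset_sum _ fun k _ => ((intOn_real hσ (k-1)).const_mul _)]
    refine Finset.sum_congr rfl fun k hk => ?_
    have hk1 : 1 ≤ k := (Finset.mem_Icc.mp hk).1
    rw [integral_const_mul, integralR hσ (k-1)]
    have hks : k - 1 + 1 = k := by omega
    have hfac : ((Nat.factorial (k-1) : ℝ)) ≠ 0 :=
      Nat.cast_ne_zero.mpr (Nat.factorial_ne_zero _)
    rw [hks, zpow_neg, zpow_natCast]
    field_simp
  have hFnormle : ∀ n, (∫ t in Ioi (0:ℝ), ‖F n t‖) ≤ B n := by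
    intro n
    rw [← hGval n]
    refine setIntegral_mono_on (hFint n).norm (hGint n) measurableSet_Ioi fun t ht => ?_
    have ht' : (0:ℝ) < t := ht
    have h1 : ‖F n t‖ = Real.exp (-σ * t) *
        ‖∑ k ∈ Finset.Icc 1 (r n), d n k * (t:ℂ) ^ (k-1) / (Nat.factorial (k-1) : ℂ)‖ := by
      rw [hFdef]
      simp only []
      rw [norm_mul, Complex.norm_exp]
      congr 2
      simp [hw n]
    rw [h1]
    have h2 : ‖∑ k ∈ Finset.Icc 1 (r n), d n k * (t:ℂ) ^ (k-1) / (Nat.factorial (k-1) : ℂ)‖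
        ≤ ∑ k ∈ Finset.Icc 1 (r n), ‖d n k‖ * t ^ (k-1) / (Nat.factorial (k-1) : ℝ) := by
      refine (norm_sum_le _ _).trans (le_of_eq (Finset.sum_congr rfl fun k _ => ?_))
      rw [norm_div, norm_mul,
        norm_pow, Complex.norm_real, Real.norm_eq_abs, abs_of_pos ht', Complex.norm_natCast]
    calc Real.exp (-σ * t) * ‖∑ k ∈ Finset.Icc 1 (r n),
          d n k * (t:ℂ) ^ (k-1) / (Nat.factorial (k-1) : ℂ)‖
        ≤ Real.exp (-σ * t) * ∑ k ∈ Finset.Icc 1 (r n),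
          ‖d n k‖ * t ^ (k-1) / (Nat.factorial (k-1) : ℝ) :=
          mul_le_mul_of_nonneg_left h2 (Real.exp_nonneg _)
      _ = ∑ k ∈ Finset.Icc 1 (r n), (‖d n k‖ / (Nat.factorial (k-1) : ℝ)) *
          (Real.exp (-σ * t) * t ^ (k-1)) := by
          rw [Finset.mul_sum]
          exact Finset.sum_congr rfl fun k _ => by ring
  have hB : Summable B := hsum
  have hBnn : ∀ n, 0 ≤ B n := fun n => Finset.sum_nonneg fun k _ => by positivity
  have hmeas : ∀ n, AEStronglyMeasurable (F n) μ := fun n => (hcont n).aestronglyMeasurable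
  have key : (∑' n : ℕ, ∫⁻ t, ‖F n t‖₊ ∂μ) ≠ ⊤ := by
    have hle : (∑' n : ℕ, ∫⁻ t, ‖F n t‖₊ ∂μ) ≤ ∑' n : ℕ, ENNReal.ofReal (B n) := by
      refine ENNReal.tsum_le_tsum fun n => ?_
      simp only [← enorm_eq_nnnorm]
      rw [hμ, ← ofReal_integral_norm_eq_lintegral_enorm (hFint n)]
      exact ENNReal.ofReal_le_ofReal (hFnormle n)
    rw [← ENNReal.ofReal_tsum_of_nonneg hBnn hB] at hle
    exact (lt_of_le_of_lt hle ENNReal.ofReal_lt_top).ne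
  have hae : ∀ᵐ t ∂μ, Summable (fun n => F n t) := by
    have h1 : (∫⁻ t, ∑' n, (‖F n t‖₊ : ℝ≥0∞) ∂μ) ≠ ⊤ := by
      simp only [← enorm_eq_nnnorm]
      rw [lintegral_tsum fun n => (hmeas n).enorm]
      exact key
    have h2 := ae_lt_top' (AEMeasurable.ennreal_tsum fun n => (hmeas n).enorm) h1
    filter_upwards [h2] with t ht
    have hs : Summable fun n => ((‖F n t‖₊ : ℝ≥0) : ℝ) := by
      rw [← ENNReal.tsum_coe_ne_top_iff_summable_coe]
      exact ht.ne
    exact Summable.of_norm (by simpa [coe_nnnorm] using hs)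
  have htsum_meas : AEStronglyMeasurable (fun t => ∑' n, F n t) μ := by
    refine aestronglyMeasurable_of_tendsto_ae atTop
      (f := fun N t => ∑ n ∈ Finset.range N, F n t)
      (fun N => (continuous_finset_sum _ fun n _ => hcont n).aestronglyMeasurable) ?_
    filter_upwards [hae] with t ht using ht.hasSum.tendsto_sum_nat
  have hint : Integrable (fun t => ∑' n, F n t) μ := by
    refine ⟨htsum_meas, ?_⟩
    show (∫⁻ t, ‖∑' n, F n t‖₊ ∂μ) < ⊤
    calc (∫⁻ t, ‖∑' n, F n t‖₊ ∂μ) ≤ ∫⁻ t, ∑' n, (‖F n t‖₊ : ℝ≥0∞) ∂μ := by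
          refine lintegral_mono_ae ?_
          filter_upwards [hae] with t ht
          have hnn : Summable fun n => ‖F n t‖₊ := by
            rw [← NNReal.summable_coe]
            simpa [coe_nnnorm] using summable_norm_iff.mpr ht
          calc ((‖∑' n, F n t‖₊ : ℝ≥0) : ℝ≥0∞)
              ≤ ((∑' n, ‖F n t‖₊ : ℝ≥0) : ℝ≥0∞) := ENNReal.coe_le_coe.mpr (nnnorm_tsum_le hnn)
            _ = ∑' n, (‖F n t‖₊ : ℝ≥0∞) := ENNReal.coe_tsum hnn
      _ < ⊤ := by
          simp only [← enorm_eq_nnnorm]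
          rw [lintegral_tsum fun n => (hmeas n).enorm]
          exact lt_top_iff_ne_top.mpr key
  refine ⟨hint, ?_⟩
  rw [show (∫ t in Ioi (0:ℝ), ∑' n : ℕ, Complex.exp (-(w n) * t) *
        ∑ k ∈ Finset.Icc 1 (r n), d n k * (t:ℂ) ^ (k-1) / (Nat.factorial (k-1)))
      = ∫ t, (∑' n, F n t) ∂μ from rfl]
  rw [integral_tsum hmeas key]
  exact tsum_congr hFval

end St6


theorem statement6 (p : ℕ → ℝ) (hp : Function.Injective p)
    (hacc : ∀ C : ℝ, 0 < C → {n : ℕ | |p n| ≤ C}.Finite)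
    (r : ℕ → ℕ) (hrpos : ∀ n, 0 < r n) (c : ℕ → ℕ → ℂ)
    (hsum : ∀ ε : ℝ, 0 < ε → Summable (fun n : ℕ =>
      ∑ k ∈ Finset.Icc 1 (r n), ‖c n k‖ * ε ^ (-(k : ℤ))))
    (P : ℂ → ℂ)
    (hP : ∀ s : ℂ, P s = ∑' n : ℕ, ∑ k ∈ Finset.Icc 1 (r n),
      c n k * (s - Complex.I * p n) ^ (-(k : ℤ)))
    (f : ℝ → ℂ)
    (hf : ∀ t : ℝ, f t = ∑' n : ℕ, Complex.exp (Complex.I * p n * t) *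
      ∑ k ∈ Finset.Icc 1 (r n),
        c n k * (t : ℂ) ^ (k - 1) / (Nat.factorial (k - 1))) :
    (∀ s : ℂ, 0 < s.re →
      MeasureTheory.IntegrableOn (fun t : ℝ => Complex.exp (-s * t) * f t) (Set.Ioi 0) ∧
      (∫ t in Set.Ioi (0:ℝ), Complex.exp (-s * t) * f t) = P s) ∧
    (∀ s : ℂ, s.re < 0 →
      MeasureTheory.IntegrableOn (fun t : ℝ => Complex.exp (-s * t) * f t) (Set.Iio 0) ∧
      -(∫ t in Set.Iio (0:ℝ), Complex.exp (-s * t) * f t) = P s) := by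
  constructor
  · intro s hs
    have hw : ∀ n : ℕ, ((s - Complex.I * p n)).re = s.re := by intro n; simp
    have hcore := St6.core r (fun n => s - Complex.I * p n) s.re hs hw c (hsum s.re hs)
    have hfun : (fun t : ℝ => Complex.exp (-s * t) * f t)
        = fun t : ℝ => ∑' n : ℕ, Complex.exp (-(s - Complex.I * p n) * t) *
            ∑ k ∈ Finset.Icc 1 (r n),
              c n k * (t:ℂ) ^ (k-1) / (Nat.factorial (k-1)) := by
      funext t
      rw [hf t, ← tsum_mul_left]
      refine tsum_congr fun n => ?_
      rw [← mul_assoc, ← Complex.exp_add]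
      congr 2
      ring
    rw [hfun, hP s]
    exact hcore
  · intro s hs
    have hσ : 0 < -s.re := by linarith
    set w : ℕ → ℂ := fun n => -(s - Complex.I * p n) with hwdef
    have hw : ∀ n, (w n).re = -s.re := by intro n; simp [hwdef]
    set d : ℕ → ℕ → ℂ := fun n k => -((-1:ℂ)^k * c n k) with hddef
    have habs : ∀ n k, ‖d n k‖ = ‖c n k‖ := by
      intro n k
      simp [hddef]
    have hsum2 : Summable (fun n : ℕ => ∑ k ∈ Finset.Icc 1 (r n),
        ‖d n k‖ * (-s.re) ^ (-(k:ℤ))) := by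
      refine (hsum (-s.re) hσ).congr fun n => ?_
      exact Finset.sum_congr rfl fun k _ => by rw [habs]
    have hcore := St6.core r w (-s.re) hσ hw d hsum2
    have hfun : ∀ t : ℝ, Complex.exp (-s * ((-t : ℝ) : ℂ)) * f (-t)
        = ∑' n : ℕ, Complex.exp (-(w n) * t) * ∑ k ∈ Finset.Icc 1 (r n),
            d n k * (t:ℂ) ^ (k-1) / (Nat.factorial (k-1)) := by
      intro t
      rw [hf (-t), ← tsum_mul_left]
      refine tsum_congr fun n => ?_
      rw [← mul_assoc, ← Complex.exp_add]
      have harg : -s * ((-t:ℝ):ℂ) + Complex.I * (p n) * ((-t:ℝ):ℂ) = -(w n) * t := by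
        simp only [hwdef]
        push_cast
        ring
      rw [harg]
      congr 1
      refine Finset.sum_congr rfl fun k hk => ?_
      have hk1 : 1 ≤ k := (Finset.mem_Icc.mp hk).1
      obtain ⟨j, rfl⟩ : ∃ j, k = j + 1 := ⟨k - 1, by omega⟩
      have hcast : ((-t:ℝ):ℂ) = -(t:ℂ) := by push_cast; ring
      rw [hcast]
      simp only [Nat.add_sub_cancel, hddef]
      rw [neg_pow, pow_succ]
      ring
    have hval : (∑' n : ℕ, ∑ k ∈ Finset.Icc 1 (r n), d n k * (w n) ^ (-(k:ℤ)))
        = -(P s) := by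
      rw [hP s, ← tsum_neg]
      refine tsum_congr fun n => ?_
      rw [← Finset.sum_neg_distrib]
      refine Finset.sum_congr rfl fun k hk => ?_
      have ha : w n = (-1) * (s - Complex.I * p n) := by rw [hwdef]; ring
      have h1 : (((-1:ℂ))^k)⁻¹ = (-1:ℂ)^k := by
        rcases Nat.even_or_odd k with h | h
        · rw [h.neg_one_pow]; norm_num
        · rw [h.neg_one_pow]; norm_num
      have h2 : ((-1:ℂ))^k * (-1:ℂ)^k = 1 := by
        rw [← pow_add]
        exact Even.neg_one_pow ⟨k, by ring⟩
      simp only [hddef]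
      rw [ha, mul_zpow, zpow_neg, zpow_neg, zpow_natCast, zpow_natCast, h1]
      rw [show -((-1:ℂ)^k * c n k) * ((-1:ℂ)^k * ((s - Complex.I * p n)^k)⁻¹ )
          = -(((-1:ℂ)^k * (-1:ℂ)^k) * (c n k * ((s - Complex.I * p n)^k)⁻¹)) by ring, h2,
        one_mul]
    constructor
    · rw [← (Measure.measurePreserving_neg (volume : Measure ℝ)).integrableOn_comp_preimage
        (Homeomorph.neg ℝ).measurableEmbedding]
      simp only [Function.comp_def, Set.neg_preimage, Set.neg_Iio, neg_zero]
      exact hcore.1.congr_fun (fun t ht => (hfun t).symm) measurableSet_Ioi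
    · have h3 := integral_comp_neg_Ioi (0:ℝ) (fun t : ℝ => Complex.exp (-s * t) * f t)
      rw [neg_zero] at h3
      have hIoi : (∫ t in Set.Ioi (0:ℝ), Complex.exp (-s * ((-t:ℝ):ℂ)) * f (-t)) = -(P s) := by
        rw [show (fun t : ℝ => Complex.exp (-s * ((-t:ℝ):ℂ)) * f (-t))
            = fun t : ℝ => ∑' n : ℕ, Complex.exp (-(w n) * t) * ∑ k ∈ Finset.Icc 1 (r n),
                d n k * (t:ℂ) ^ (k-1) / (Nat.factorial (k-1)) from funext hfun]
        rw [hcore.2, hval]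
      rw [← MeasureTheory.integral_Iic_eq_integral_Iio, ← h3, hIoi, neg_neg]
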